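/- Let N ≥ 1, τ, W, σ², R > 0, w_G, w_D > 0, p_G^max, p_H^max > 0, channel gains h_{G,i}, h_{H,i} > 0 and energy arrivals E_{H,i} ≥ 0 for i = 1,…,N, and let r(p,h) = τ·W·log₂(1 + h·σ^{−2}·p). Consider problem P1: minimize Σ_{n=1}^{N} (w_G·p_{G,n}·τ + w_D·I_{D,n}) over indicators I_{G,i}, I_{H,i}, I_{D,i} ∈ {0,1} with I_{G,i}+I_{H,i}+I_{D,i} = 1 and powers 0 ≤ p_{j,i} ≤ p_j^max (j ∈ {G,H}), subject to the energy causality constraints Σ_{l=1}^{i} p_{H,l}·τ ≤ Σ_{n=1}^{i} E_{H,n} for all i and the QoS constraints I_{G,i}·r(p_{G,i},h_{G,i}) + I_{H,i}·r(p_{H,i},h_{H,i}) ≥ (1 − I_{D,i})·R for all i. Define p_{H,i}^inv = (2^{R/(W·τ)} − 1)·σ²/h_{H,i}, p_{G,i}^inv = (2^{R/(W·τ)} − 1)·σ²/h_{G,i}, κ = min(p_G^max, w_D/(w_G·τ)), and c_i = w_G·p_{G,i}^inv·τ if p_{G,i}^inv ≤ κ and c_i = w_D otherwise. Then the infimum of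 the P1 objective over its feasible set equals the minimum over all α ∈ {0,1}^N satisfying Σ_{k=1}^{i} α_k·p_{H,k}^inv·τ ≤ Σ_{l=1}^{i} E_{H,l} for all i and α_i·p_{H,i}^inv ≤ p_H^max for all i, of Σ_{n=1}^{N} (1 − α_n)·c_n. -/

import Mathlib

/-- Lemma 1 of the paper: the infimum of the off-line total-service-cost problem `P1`
(over BS assignment indicators and transmit powers) equals the minimum of the equivalent
zero-one integer program `P̂1` over the binary vector `α`.  Stated as: `sInf` of the set of
`P1` objective values is the least element (`IsLeast`) of the set of `P̂1` objective values. -/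
theorem stmt1 (N : ℕ) (hN : 1 ≤ N) (τ W σ2 R wG wD pGmax pHmax : ℝ)
    (hτ : 0 < τ) (hW : 0 < W) (hσ : 0 < σ2) (hR : 0 < R)
    (hwG : 0 < wG) (hwD : 0 < wD) (hpGmax : 0 < pGmax) (hpHmax : 0 < pHmax)
    (hG hH E : Fin N → ℝ) (hhG : ∀ i, 0 < hG i) (hhH : ∀ i, 0 < hH i)
    (hE : ∀ i, 0 ≤ E i)
    (r : ℝ → ℝ → ℝ)
    (hr : ∀ p h, r p h = τ * W * Real.logb 2 (1 + h * σ2⁻¹ * p))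
    (pHinv pGinv c : Fin N → ℝ) (κ : ℝ)
    (hκ : κ = min pGmax (wD / (wG * τ)))
    (hpHinv : ∀ i, pHinv i = ((2 : ℝ) ^ (R / (W * τ)) - 1) * σ2 / hH i)
    (hpGinv : ∀ i, pGinv i = ((2 : ℝ) ^ (R / (W * τ)) - 1) * σ2 / hG i)
    (hc : ∀ i, c i = if pGinv i ≤ κ then wG * pGinv i * τ else wD) :
    IsLeast
      {y : ℝ | ∃ α : Fin N → ℝ, (∀ i, α i = 0 ∨ α i = 1) ∧
        (∀ i : Fin N, (∑ k ∈ Finset.univ.filter (· ≤ i), α k * pHinv k * τ)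
              ≤ ∑ l ∈ Finset.univ.filter (· ≤ i), E l) ∧
        (∀ i, α i * pHinv i ≤ pHmax) ∧
        y = ∑ n, (1 - α n) * c n}
      (sInf {y : ℝ | ∃ IG IH ID pG pH : Fin N → ℝ,
        (∀ i, (IG i = 0 ∨ IG i = 1) ∧ (IH i = 0 ∨ IH i = 1) ∧ (ID i = 0 ∨ ID i = 1)) ∧
        (∀ i, IG i + IH i + ID i = 1) ∧
        (∀ i, 0 ≤ pG i ∧ pG i ≤ pGmax) ∧
        (∀ i, 0 ≤ pH i ∧ pH i ≤ pHmax) ∧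
        (∀ i : Fin N, (∑ l ∈ Finset.univ.filter (· ≤ i), pH l * τ)
              ≤ ∑ n ∈ Finset.univ.filter (· ≤ i), E n) ∧
        (∀ i, (1 - ID i) * R ≤ IG i * r (pG i) (hG i) + IH i * r (pH i) (hH i)) ∧
        y = ∑ n, (wG * pG n * τ + wD * ID n)}) := by
  classical
  set A := {y : ℝ | ∃ α : Fin N → ℝ, (∀ i, α i = 0 ∨ α i = 1) ∧
        (∀ i : Fin N, (∑ k ∈ Finset.univ.filter (· ≤ i), α k * pHinv k * τ)
              ≤ ∑ l ∈ Finset.univ.filter (· ≤ i), E l) ∧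
        (∀ i, α i * pHinv i ≤ pHmax) ∧
        y = ∑ n, (1 - α n) * c n} with hA
  set S := {y : ℝ | ∃ IG IH ID pG pH : Fin N → ℝ,
        (∀ i, (IG i = 0 ∨ IG i = 1) ∧ (IH i = 0 ∨ IH i = 1) ∧ (ID i = 0 ∨ ID i = 1)) ∧
        (∀ i, IG i + IH i + ID i = 1) ∧
        (∀ i, 0 ≤ pG i ∧ pG i ≤ pGmax) ∧
        (∀ i, 0 ≤ pH i ∧ pH i ≤ pHmax) ∧
        (∀ i : Fin N, (∑ l ∈ Finset.univ.filter (· ≤ i), pH l * τ)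
              ≤ ∑ n ∈ Finset.univ.filter (· ≤ i), E n) ∧
        (∀ i, (1 - ID i) * R ≤ IG i * r (pG i) (hG i) + IH i * r (pH i) (hH i)) ∧
        y = ∑ n, (wG * pG n * τ + wD * ID n)} with hS
  -- basic positivity facts
  have hexp : 0 < R / (W * τ) := div_pos hR (mul_pos hW hτ)
  have h2 : (1 : ℝ) < (2 : ℝ) ^ (R / (W * τ)) :=
    (Real.one_lt_rpow_iff_of_pos (by norm_num)).mpr (Or.inl ⟨by norm_num, hexp⟩)
  have hg : 0 < (2 : ℝ) ^ (R / (W * τ)) - 1 := sub_pos.mpr h2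
  have hpHinvpos : ∀ i, 0 < pHinv i := fun i => by
    rw [hpHinv]; exact div_pos (mul_pos hg hσ) (hhH i)
  have hpGinvpos : ∀ i, 0 < pGinv i := fun i => by
    rw [hpGinv]; exact div_pos (mul_pos hg hσ) (hhG i)
  -- r at channel-inversion power equals R
  have hrinv : ∀ h : ℝ, 0 < h →
      r (((2 : ℝ) ^ (R / (W * τ)) - 1) * σ2 / h) h = R := by
    intro h hh
    rw [hr]
    have h1 : h * σ2⁻¹ * (((2 : ℝ) ^ (R / (W * τ)) - 1) * σ2 / h)
        = (2 : ℝ) ^ (R / (W * τ)) - 1 := by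
      field_simp
    rw [h1]
    have h2' : (1 : ℝ) + ((2 : ℝ) ^ (R / (W * τ)) - 1) = (2 : ℝ) ^ (R / (W * τ)) := by ring
    rw [h2', Real.logb_rpow (by norm_num) (by norm_num)]
    field_simp
  -- monotonicity / inversion of r
  have hmono : ∀ p h : ℝ, 0 ≤ p → 0 < h → R ≤ r p h →
      ((2 : ℝ) ^ (R / (W * τ)) - 1) * σ2 / h ≤ p := by
    intro p h hp hh hle
    rw [hr] at hle
    have hx : (0 : ℝ) < 1 + h * σ2⁻¹ * p := by positivity
    have h3 : R / (W * τ) ≤ Real.logb 2 (1 + h * σ2⁻¹ * p) := by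
      rw [div_le_iff₀ (mul_pos hW hτ)]
      nlinarith [hle]
    have h4 : (2 : ℝ) ^ (R / (W * τ)) ≤ 1 + h * σ2⁻¹ * p :=
      (Real.le_logb_iff_rpow_le (by norm_num) hx).mp h3
    rw [div_le_iff₀ hh]
    have h5 : ((2:ℝ)^(R/(W*τ)) - 1) * σ2 ≤ h * σ2⁻¹ * p * σ2 :=
      mul_le_mul_of_nonneg_right (by linarith) hσ.le
    have h6 : h * σ2⁻¹ * p * σ2 = p * h := by field_simp
    linarith
  -- A is nonempty
  have hAne : A.Nonempty := by
    refine ⟨∑ n, (1 - (0:ℝ)) * c n, (fun _ => (0:ℝ)), fun i => Or.inl rfl, ?_, ?_, rfl⟩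
    · intro i
      simp only [zero_mul]
      calc (∑ k ∈ Finset.univ.filter (· ≤ i), (0:ℝ)) = 0 := by simp
        _ ≤ ∑ l ∈ Finset.univ.filter (· ≤ i), E l :=
          Finset.sum_nonneg fun l _ => hE l
    · intro i; simpa using le_of_lt hpHmax
  -- A is finite
  have hAfin : A.Finite := by
    have hsub : A ⊆ Set.range (fun b : Fin N → Bool =>
        ∑ n, (1 - (if b n then (1:ℝ) else 0)) * c n) := by
      rintro y ⟨α, hα01, -, -, hy⟩
      refine ⟨fun n => if α n = 1 then true else false, ?_⟩
      rw [hy]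
      apply Finset.sum_congr rfl
      intro n _
      rcases hα01 n with h | h <;> simp [h]
    exact (Set.finite_range _).subset hsub
  -- least element of A
  have hAleast : IsLeast A (sInf A) :=
    ⟨hAne.csInf_mem hAfin, fun b hb => csInf_le hAfin.bddBelow hb⟩
  set m := sInf A with hm
  -- m ∈ S : realize an optimal α as a P1 solution
  have hmS : m ∈ S := by
    obtain ⟨α, hα01, hαE, hαP, hval⟩ := hAleast.1
    refine ⟨fun i => if α i = 1 then 0 else if pGinv i ≤ κ then 1 else 0,
      α,
      fun i => if α i = 1 then 0 else if pGinv i ≤ κ then 0 else 1,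
      fun i => if α i = 1 then 0 else if pGinv i ≤ κ then pGinv i else 0,
      fun i => α i * pHinv i, ?_, ?_, ?_, ?_, ?_, ?_, ?_⟩
    · intro i
      rcases hα01 i with h | h <;> by_cases hκi : pGinv i ≤ κ <;>
        simp [h, hκi]
    · intro i
      rcases hα01 i with h | h <;> by_cases hκi : pGinv i ≤ κ <;>
        simp [h, hκi]
    · intro i
      rcases hα01 i with h | h <;> by_cases hκi : pGinv i ≤ κ <;> simp [h, hκi]
      · exact ⟨le_of_lt (hpGinvpos i), le_trans hκi (by rw [hκ]; exact min_le_left _ _)⟩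
      · exact le_of_lt hpGmax
      · exact le_of_lt hpGmax
      · exact le_of_lt hpGmax
    · intro i
      constructor
      · rcases hα01 i with h | h <;> simp [h, le_of_lt (hpHinvpos i)]
      · exact hαP i
    · intro i; exact hαE i
    · intro i
      rcases hα01 i with h | h
      · by_cases hκi : pGinv i ≤ κ <;> simp [h, hκi]
        · have := hrinv (hG i) (hhG i)
          rw [← hpGinv] at this
          rw [this]
      · simp [h]
        have := hrinv (hH i) (hhH i)
        rw [← hpHinv] at this
        rw [this]
    · rw [hval]
      apply Finset.sum_congr rfl
      intro n _
      rcases hα01 n with h | h <;> by_cases hκn : pGinv n ≤ κ <;>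
        simp [h, hκn, hc n] <;> ring
  -- m is a lower bound of S
  have hmlb : ∀ y ∈ S, m ≤ y := by
    rintro y ⟨IG, IH, ID, pG, pH, hI01, hIsum, hpG, hpH, hEn, hQ, hy⟩
    -- exactly-one structure
    have hone : ∀ i, (IH i = 1 ∧ IG i = 0 ∧ ID i = 0) ∨
        (IH i = 0 ∧ IG i = 1 ∧ ID i = 0) ∨ (IH i = 0 ∧ IG i = 0 ∧ ID i = 1) := by
      intro i
      obtain ⟨hG', hH', hD'⟩ := hI01 i
      have hs := hIsum i
      rcases hG' with h1 | h1 <;> rcases hH' with h2 | h2 <;> rcases hD' with h3 | h3 <;>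
        simp [h1, h2, h3] at hs ⊢ <;> linarith
    -- pHinv ≤ pH when IH = 1
    have hHkey : ∀ i, IH i * pHinv i ≤ pH i := by
      intro i
      rcases hone i with ⟨h1, h2, h3⟩ | ⟨h1, h2, h3⟩ | ⟨h1, h2, h3⟩
      · rw [h1, one_mul]
        have hq := hQ i
        rw [h2, h1, h3] at hq
        simp at hq
        have := hmono (pH i) (hH i) (hpH i).1 (hhH i) hq
        rw [← hpHinv] at this
        exact this
      all_goals rw [h1, zero_mul]; exact (hpH i).1
    have hAval : (∑ n, (1 - IH n) * c n) ∈ A := by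
      refine ⟨IH, fun i => (hI01 i).2.1, ?_, ?_, rfl⟩
      · intro i
        refine le_trans ?_ (hEn i)
        apply Finset.sum_le_sum
        intro k _
        exact mul_le_mul_of_nonneg_right (hHkey k) (le_of_lt hτ)
      · intro i
        exact le_trans (hHkey i) (hpH i).2
    have hterm : ∀ n, (1 - IH n) * c n ≤ wG * pG n * τ + wD * ID n := by
      intro n
      have hcpos : 0 ≤ c n := by
        rw [hc n]
        split
        · have := hpGinvpos n; positivity
        · exact le_of_lt hwD
      rcases hone n with ⟨h1, h2, h3⟩ | ⟨h1, h2, h3⟩ | ⟨h1, h2, h3⟩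
      · rw [h1, h3]
        have h5 : 0 ≤ wG * pG n * τ := by
          have := (hpG n).1; positivity
        nlinarith
      · -- grid BS serves: IG = 1
        rw [h1, h3]
        have hq := hQ n
        rw [h1, h2, h3] at hq
        simp at hq
        have hkey := hmono (pG n) (hG n) (hpG n).1 (hhG n) hq
        rw [← hpGinv] at hkey
        rw [hc n]
        split_ifs with hκn
        · nlinarith [mul_le_mul_of_nonneg_right (mul_le_mul_of_nonneg_left hkey hwG.le) hτ.le]
        · push_neg at hκn
          have hκ2 : wD / (wG * τ) < pGinv n := by
            rcases le_total pGmax (wD / (wG * τ)) with hmin | hmin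
            · exfalso
              have : κ = pGmax := by rw [hκ, min_eq_left hmin]
              rw [this] at hκn
              exact absurd ((hpG n).2) (not_le.mpr (lt_of_lt_of_le hκn hkey))
            · rw [hκ, min_eq_right hmin] at hκn; exact hκn
          have : wD < wG * τ * pGinv n := by
            rw [div_lt_iff₀ (mul_pos hwG hτ)] at hκ2
            linarith [hκ2]
          nlinarith [mul_le_mul_of_nonneg_left hkey (mul_pos hwG hτ).le]
      · -- deferred: ID = 1
        rw [h1, h3]
        have hcwD : c n ≤ wD := by
          rw [hc n]
          split_ifs with hκn
          · have hκ3 : κ ≤ wD / (wG * τ) := by rw [hκ]; exact min_le_right _ _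
            have : pGinv n ≤ wD / (wG * τ) := le_trans hκn hκ3
            rw [le_div_iff₀ (mul_pos hwG hτ)] at this
            nlinarith
          · exact le_refl wD
        have h5 : 0 ≤ wG * pG n * τ := by
          have := (hpG n).1; positivity
        nlinarith
    have : (∑ n, (1 - IH n) * c n) ≤ y := by
      rw [hy]; exact Finset.sum_le_sum fun n _ => hterm n
    exact le_trans (hAleast.2 hAval) this
  have hSeq : sInf S = m :=
    le_antisymm (csInf_le ⟨m, hmlb⟩ hmS) (le_csInf ⟨m, hmS⟩ hmlb)
  rw [hSeq]
  exact hAleast
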